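/- The Clebsch graph, defined as the Cayley graph on (Z/2)^4 with connection set consisting of the four unit vectors and the all-ones vector, is triangle-free, 5-regular, twin-free, and every independent set of at most 3 vertices has a common neighbor. -/

import Mathlib

set_option maxHeartbeats 2000000

/-- The Clebsch graph: vertices `(Z/2)^4`, adjacent iff the Hamming distance
is `1` or `4` (i.e. the difference is a unit vector or the all-ones vector). -/
def clebsch : SimpleGraph (Fin 4 → ZMod 2) where
  Adj x y := hammingDist x y = 1 ∨ hammingDist x y = 4
  symm := ⟨by intro x y h; rwa [hammingDist_comm]⟩
  loopless := ⟨by intro x h; rw [hammingDist_self] at h; omega⟩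

instance : DecidableRel clebsch.Adj := fun x y => by
  dsimp [clebsch]; infer_instance

lemma clebsch_trifree : ∀ x y z : Fin 4 → ZMod 2,
    clebsch.Adj x y → clebsch.Adj x z → clebsch.Adj y z → False := by decide

lemma clebsch_twin : ∀ x y : Fin 4 → ZMod 2,
    (∀ z, clebsch.Adj x z ↔ clebsch.Adj y z) → x = y := by decide

lemma clebsch_common : ∀ x y z : Fin 4 → ZMod 2,
    ¬ clebsch.Adj x y → ¬ clebsch.Adj x z → ¬ clebsch.Adj y z →
    ∃ v, clebsch.Adj v x ∧ clebsch.Adj v y ∧ clebsch.Adj v z := by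
  have h : ∀ x y z : Fin 4 → ZMod 2,
      clebsch.Adj x y ∨ clebsch.Adj x z ∨ clebsch.Adj y z ∨
      ∃ v, clebsch.Adj v x ∧ clebsch.Adj v y ∧ clebsch.Adj v z := by decide
  intro x y z h1 h2 h3
  rcases h x y z with h|h|h|h <;> tauto

theorem stmt_18 :
    clebsch.CliqueFree 3 ∧
    clebsch.IsRegularOfDegree 5 ∧
    (∀ x y : Fin 4 → ZMod 2,
      clebsch.neighborSet x = clebsch.neighborSet y → x = y) ∧
    (∀ S : Finset (Fin 4 → ZMod 2), S.card ≤ 3 →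
      (∀ x ∈ S, ∀ y ∈ S, x ≠ y → ¬ clebsch.Adj x y) →
      ∃ v, ∀ x ∈ S, clebsch.Adj v x) := by
  refine ⟨?_, ?_, ?_, ?_⟩
  · -- triangle-free
    intro t ht
    obtain ⟨a, b, c, hab, hac, hbc, rfl⟩ := Finset.card_eq_three.mp ht.card_eq
    have hcl := ht.isClique
    exact clebsch_trifree a b c
      (hcl (by simp) (by simp) hab)
      (hcl (by simp) (by simp) hac)
      (hcl (by simp) (by simp) hbc)
  · -- 5-regular
    intro v; revert v; decide
  · -- twin-free
    intro x y h
    refine clebsch_twin x y fun z => ?_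
    have := Set.ext_iff.mp h z
    simpa [SimpleGraph.mem_neighborSet] using this
  · -- common neighbor for independent sets of size ≤ 3
    intro S hS hind
    rcases Finset.eq_empty_or_nonempty S with rfl | hne
    · exact ⟨0, by simp⟩
    interval_cases hc : S.card
    · exact absurd (Finset.card_eq_zero.mp hc) hne.ne_empty
    · obtain ⟨a, rfl⟩ := Finset.card_eq_one.mp hc
      obtain ⟨v, hv, -, -⟩ := clebsch_common a a a (clebsch.irrefl) (clebsch.irrefl)
        (clebsch.irrefl)
      exact ⟨v, by simpa using hv⟩
    · obtain ⟨a, b, hab, rfl⟩ := Finset.card_eq_two.mp hc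
      have h1 : ¬ clebsch.Adj a b := hind a (by simp) b (by simp) hab
      obtain ⟨v, hva, hvb, -⟩ := clebsch_common a b b h1 h1 (clebsch.irrefl)
      refine ⟨v, fun x hx => ?_⟩
      rcases Finset.mem_insert.mp hx with rfl | hx
      · exact hva
      · rw [Finset.mem_singleton.mp hx]; exact hvb
    · obtain ⟨a, b, c, hab, hac, hbc, rfl⟩ := Finset.card_eq_three.mp hc
      have h1 : ¬ clebsch.Adj a b := hind a (by simp) b (by simp) hab
      have h2 : ¬ clebsch.Adj a c := hind a (by simp) c (by simp) hac
      have h3 : ¬ clebsch.Adj b c := hind b (by simp) c (by simp) hbc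
      obtain ⟨v, hva, hvb, hvc⟩ := clebsch_common a b c h1 h2 h3
      refine ⟨v, fun x hx => ?_⟩
      rcases Finset.mem_insert.mp hx with rfl | hx
      · exact hva
      rcases Finset.mem_insert.mp hx with rfl | hx
      · exact hvb
      · rw [Finset.mem_singleton.mp hx]; exact hvc
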